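/- If f : [0,∞) → [0,∞) is s-convex in the second sense for s ∈ (0,1] and 0 ≤ a < b, then ∫_0^1 f(ta+(1-t)b) dt = (1/(b-a)) ∫_a^b f(x) dx and hence (1/(b-a))∫_a^b f(x) dx ≤ f(a)/(s+1) + f(b)/(s+1). -/

import Mathlib

open MeasureTheory

theorem s_convex_substitution (s : ℝ) (f : ℝ → ℝ) (a b : ℝ)
    (hs : s ∈ Set.Ioc (0:ℝ) 1)
    (hf : ∀ x ∈ Set.Ici (0:ℝ), 0 ≤ f x)
    (hconv : ∀ x ∈ Set.Ici (0:ℝ), ∀ y ∈ Set.Ici (0:ℝ), ∀ t ∈ Set.Icc (0:ℝ) 1,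
      f (t * x + (1 - t) * y) ≤ t ^ s * f x + (1 - t) ^ s * f y)
    (ha : 0 ≤ a) (hab : a < b)
    (hfint : IntegrableOn f (Set.Icc a b)) :
    (∫ t in (0:ℝ)..1, f (t * a + (1 - t) * b)) = (1 / (b - a)) * ∫ x in a..b, f x ∧
    (1 / (b - a)) * ∫ x in a..b, f x ≤ f a / (s + 1) + f b / (s + 1) := by
  have hba : b - a ≠ 0 := by linarith
  have hab' : a - b ≠ 0 := by linarith
  have hfi : IntervalIntegrable f volume a b := by
    rw [intervalIntegrable_iff_integrableOn_Icc_of_le hab.le]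
    exact hfint
  have key : ∀ t : ℝ, t * a + (1 - t) * b = (a - b) * t + b := by intro t; ring
  have heq : (∫ t in (0:ℝ)..1, f (t * a + (1 - t) * b))
      = (1 / (b - a)) * ∫ x in a..b, f x := by
    simp_rw [key]
    rw [intervalIntegral.integral_comp_mul_add f hab' b]
    rw [show (a - b) * 0 + b = b by ring, show (a - b) * 1 + b = a by ring,
      intervalIntegral.integral_symm a b]
    simp only [smul_eq_mul]
    field_simp
    ring
  refine ⟨heq, ?_⟩
  rw [← heq]
  -- integrability of the composed function
  have hgi : IntervalIntegrable (fun t => f ((a - b) * t + b)) volume 0 1 := by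
    have h1 := (hfi.comp_add_right b).comp_mul_left (c := a - b)
    simpa [div_self hab'] using h1.symm
  have hgi' : IntervalIntegrable (fun t => f (t * a + (1 - t) * b)) volume 0 1 := by
    simp_rw [key]; exact hgi
  have hs0 : (0:ℝ) < s := hs.1
  have hrpow : IntervalIntegrable (fun t : ℝ => t ^ s) volume 0 1 :=
    intervalIntegral.intervalIntegrable_rpow (Or.inl hs0.le)
  have hrpow' : IntervalIntegrable (fun t : ℝ => (1 - t) ^ s) volume 0 1 := by
    have := (intervalIntegral.intervalIntegrable_rpow (a := 0) (b := 1) (r := s)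
      (Or.inl hs0.le)).comp_sub_left 1
    simpa using this.symm
  have hbound : IntervalIntegrable
      (fun t : ℝ => t ^ s * f a + (1 - t) ^ s * f b) volume 0 1 :=
    (hrpow.mul_const _).add (hrpow'.mul_const _)
  have hmono : (∫ t in (0:ℝ)..1, f (t * a + (1 - t) * b))
      ≤ ∫ t in (0:ℝ)..1, (t ^ s * f a + (1 - t) ^ s * f b) := by
    apply intervalIntegral.integral_mono_on zero_le_one hgi' hbound
    intro t ht
    exact hconv a ha b (by linarith : (0:ℝ) ≤ b) t ht
  refine hmono.trans_eq ?_
  rw [intervalIntegral.integral_add (hrpow.mul_const _) (hrpow'.mul_const _),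
    intervalIntegral.integral_mul_const, intervalIntegral.integral_mul_const]
  have h1 : (∫ t in (0:ℝ)..1, t ^ s) = 1 / (s + 1) := by
    rw [integral_rpow (Or.inl (by linarith))]
    simp [Real.one_rpow, Real.zero_rpow (by linarith : s + 1 ≠ 0)]
  have h2 : (∫ t in (0:ℝ)..1, (1 - t) ^ s) = 1 / (s + 1) := by
    rw [intervalIntegral.integral_comp_sub_left (fun u : ℝ => u ^ s) 1]
    norm_num [h1]
  rw [h1, h2]
  ring
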